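/- Let δ > 0, R' > 1, and set R := (1+δ/2)² e^δ R' + δ(1+δ/2)² e^δ + δ. Then for any (p,q,r) ∈ S: if Q_δ(p,q,r) \ Q_R ≠ ∅, then Q_δ(p,q,r) ∩ Q_{R'} = ∅. -/

import Mathlib

open MeasureTheory Real Filter Set
open scoped ENNReal
noncomputable section

/-- The parabolic scaling matrix `A_a = diag(a, √a)` acting on `ℝ²`. -/
def Aa (a : ℝ) (t : ℝ × ℝ) : ℝ × ℝ := (a * t.1, Real.sqrt a * t.2)

/-- The shear matrix `S_s = [[1,s],[0,1]]` acting on `ℝ²`. -/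
def Ss (s : ℝ) (t : ℝ × ℝ) : ℝ × ℝ := (t.1 + s * t.2, t.2)

/-- Underlying space of the shearlet group: `(a, s, t₁, t₂)`. -/
abbrev SG := ℝ × ℝ × ℝ × ℝ

/-- Shearlet group multiplication
`(a,s,t)·(a',s',t') = (a'a, s' + s√a', t' + S_{s'} A_{a'} t)`. -/
def smul (p q : SG) : SG :=
  (q.1 * p.1, q.2.1 + p.2.1 * Real.sqrt q.1, q.2.2 + Ss q.2.1 (Aa q.1 p.2.2))

/-- The box `Q_h = [e^{-h/2}, e^{h/2}) × [-h/2, h/2) × [-h/2, h/2)²`. -/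
def Qbox (h : ℝ) : Set SG :=
  Set.Ico (Real.exp (-h/2)) (Real.exp (h/2)) ×ˢ
    (Set.Ico (-h/2) (h/2) ×ˢ (Set.Ico (-h/2) (h/2) ×ˢ Set.Ico (-h/2) (h/2)))

/-- The left-translated box `Q_h(g) = g · Q_h`. -/
def boxAt (h : ℝ) (g : SG) : Set SG := (fun p => smul g p) '' Qbox h

set_option maxHeartbeats 1000000

private lemma box_sep_key (δ R' : ℝ) (hδ : 0 < δ) (hR' : 1 < R') (p u v : SG) (hp : 0 < p.1)
    (hu : u ∈ Qbox δ) (hv : v ∈ Qbox δ) (hx : smul p u ∈ Qbox R') :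
    smul p v ∈ Qbox ((1 + δ/2) ^ 2 * Real.exp δ * R'
        + δ * (1 + δ/2) ^ 2 * Real.exp δ + δ) := by
  obtain ⟨a, s, t1, t2⟩ := p
  obtain ⟨u1, u2, u3, u4⟩ := u
  obtain ⟨v1, v2, v3, v4⟩ := v
  simp only [Qbox, Set.mem_prod, Set.mem_Ico, smul, Ss, Aa, Prod.mk_add_mk] at hu hv hx ⊢
  obtain ⟨⟨hu1l, hu1r⟩, ⟨hu2l, hu2r⟩, ⟨hu3l, hu3r⟩, ⟨hu4l, hu4r⟩⟩ := hu
  obtain ⟨⟨hv1l, hv1r⟩, ⟨hv2l, hv2r⟩, ⟨hv3l, hv3r⟩, ⟨hv4l, hv4r⟩⟩ := hv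
  obtain ⟨⟨hx1l, hx1r⟩, ⟨hx2l, hx2r⟩, ⟨hx3l, hx3r⟩, ⟨hx4l, hx4r⟩⟩ := hx
  simp only at hp hx1l hx1r hx2l hx2r hx3l hx3r hx4l hx4r ⊢
  set su := Real.sqrt u1 with hsudef
  set sv := Real.sqrt v1 with hsvdef
  set A := Real.exp (δ/4) with hAdef
  set En := Real.exp (-δ/2) with hEndef
  have hApos : (0:ℝ) < A := Real.exp_pos _
  have hA1 : 1 < A := Real.one_lt_exp_iff.mpr (by linarith)
  have hEnpos : (0:ℝ) < En := Real.exp_pos _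
  have hEA : En * A ^ 2 = 1 := by
    rw [hEndef, hAdef, sq, ← Real.exp_add, ← Real.exp_add, show -δ/2 + (δ/4 + δ/4) = 0 by ring,
      Real.exp_zero]
  have hA2 : Real.exp (δ/2) = A ^ 2 := by
    rw [hAdef, sq, ← Real.exp_add]; congr 1; ring
  have hA4 : Real.exp δ = A ^ 4 := by
    rw [hAdef, ← Real.exp_nat_mul]; congr 1; push_cast; ring
  have hEn2 : En ^ 2 = Real.exp (-δ) := by
    rw [hEndef, sq, ← Real.exp_add]; congr 1; ring
  have hA4' : A ^ 4 = Real.exp δ := hA4.symm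
  have hsusq : su ^ 2 = u1 := Real.sq_sqrt (le_trans hEnpos.le hu1l)
  have hsvsq : sv ^ 2 = v1 := Real.sq_sqrt (le_trans hEnpos.le hv1l)
  have hsupos : 0 < su := Real.sqrt_pos.mpr (lt_of_lt_of_le hEnpos hu1l)
  have hsvpos : 0 < sv := Real.sqrt_pos.mpr (lt_of_lt_of_le hEnpos hv1l)
  rw [hA2] at hu1r hv1r
  rw [hA4]
  clear_value su sv A En
  clear hsudef hsvdef hAdef hEndef
  have hu1pos : 0 < u1 := lt_of_lt_of_le hEnpos hu1l
  have hv1pos : 0 < v1 := lt_of_lt_of_le hEnpos hv1l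
  have hsuA : su < A := by nlinarith only [hsusq, hu1r, hsupos, hApos]
  have hsvA : sv < A := by nlinarith only [hsvsq, hv1r, hsvpos, hApos]
  have hu1A2 : 1 ≤ u1 * A ^ 2 := by
    have := mul_le_mul_of_nonneg_right hu1l (sq_nonneg A)
    linarith only [this, hEA]
  have hv1A2 : 1 ≤ v1 * A ^ 2 := by
    have := mul_le_mul_of_nonneg_right hv1l (sq_nonneg A)
    linarith only [this, hEA]
  have hsuA1 : 1 ≤ su * A := by
    nlinarith only [hu1A2, hsusq, mul_pos hsupos hApos]
  have hA21 : (1:ℝ) ≤ A ^ 2 := by nlinarith only [hA1]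
  have hA41 : (1:ℝ) ≤ A ^ 4 := by nlinarith only [hA21]
  have hA42 : A ^ 2 ≤ A ^ 4 := by
    nlinarith only [mul_nonneg (sub_nonneg.mpr hA21) (sq_nonneg A)]
  -- first-step bounds from hx
  have hBpos : (0:ℝ) < (R'+δ)/2 := by linarith
  have h4u : su * t2 < (R'+δ)/2 := by linarith only [hx4r, hu4l]
  have h4l : -((R'+δ)/2) < su * t2 := by linarith only [hx4l, hu4r]
  have h2u : s * su < (R'+δ)/2 := by linarith only [hx2r, hu2l]
  have h2l : -((R'+δ)/2) < s * su := by linarith only [hx2l, hu2r]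
  have h3u : u1*t1 + u2*(su*t2) < (R'+δ)/2 := by linarith only [hx3r, hu3l]
  have h3l : -((R'+δ)/2) < u1*t1 + u2*(su*t2) := by linarith only [hx3l, hu3r]
  have habs4 : |su*t2| < (R'+δ)/2 := abs_lt.mpr ⟨h4l, h4u⟩
  have habs2 : |s*su| < (R'+δ)/2 := abs_lt.mpr ⟨h2l, h2u⟩
  have habs_u2 : |u2| ≤ δ/2 := abs_le.mpr ⟨by linarith, by linarith⟩
  have habs_v2 : |v2| ≤ δ/2 := abs_le.mpr ⟨by linarith, by linarith⟩
  have hu2w : |u2*(su*t2)| ≤ δ/2 * ((R'+δ)/2) := by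
    rw [abs_mul]; exact mul_le_mul habs_u2 habs4.le (abs_nonneg _) (by linarith)
  obtain ⟨hu2w1, hu2w2⟩ := abs_le.mp hu2w
  have habs3 : |u1*t1| < (R'+δ)/2 + δ/2*((R'+δ)/2) := by
    rw [abs_lt]
    constructor
    · linarith only [h3l, hu2w2]
    · linarith only [h3u, hu2w1]
  -- bounds on |t2|, |s|, |t1|
  have ht2 : |t2| < (R'+δ)/2 * A := by
    have h1 : |t2| ≤ |su * t2| * A := by
      rw [abs_mul, abs_of_pos hsupos]
      nlinarith only [abs_nonneg t2, hsuA1]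
    nlinarith only [h1, habs4, hApos]
  have hs : |s| < (R'+δ)/2 * A := by
    have h1 : |s| ≤ |s * su| * A := by
      rw [abs_mul, abs_of_pos hsupos]
      nlinarith only [abs_nonneg s, hsuA1]
    nlinarith only [h1, habs2, hApos]
  have ht1 : |t1| < ((R'+δ)/2 + δ/2*((R'+δ)/2)) * A^2 := by
    have h1 : |t1| ≤ |u1 * t1| * A^2 := by
      rw [abs_mul, abs_of_pos hu1pos]
      nlinarith only [abs_nonneg t1, hu1A2]
    nlinarith only [h1, habs3, pow_pos hApos 2]
  -- bounds for the v point
  have hsvt2 : |sv*t2| < (R'+δ)/2 * A * A := by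
    rw [abs_mul, abs_of_pos hsvpos]
    nlinarith only [ht2, hsvA, hsvpos, abs_nonneg t2, mul_pos hBpos hApos]
  have hssv : |s*sv| < (R'+δ)/2 * A * A := by
    rw [abs_mul, abs_of_pos hsvpos]
    nlinarith only [hs, hsvA, hsvpos, abs_nonneg s, mul_pos hBpos hApos]
  have hXpos : (0:ℝ) < (R'+δ)/2 + δ/2*((R'+δ)/2) := by nlinarith only [hBpos, hδ]
  have hv1t1 : |v1*t1| < ((R'+δ)/2 + δ/2*((R'+δ)/2)) * A^2 * A^2 := by
    rw [abs_mul, abs_of_pos hv1pos]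
    nlinarith only [ht1, hv1r, hv1pos, abs_nonneg t1, mul_pos hXpos (pow_pos hApos 2)]
  have hv2svt2 : |v2*(sv*t2)| ≤ δ/2 * ((R'+δ)/2 * A * A) := by
    rw [abs_mul]
    exact mul_le_mul habs_v2 hsvt2.le (abs_nonneg _) (by linarith)
  -- key comparison constants
  have hd1 : (1:ℝ) ≤ (1+δ/2)^2 := by nlinarith only [hδ]
  have hC1 : (1:ℝ) ≤ (1+δ/2)^2*A^4 := by
    calc (1:ℝ) = 1*1 := by ring
    _ ≤ (1+δ/2)^2*A^4 := mul_le_mul hd1 hA41 zero_le_one (by positivity)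
  have hkey1 : (R'+δ)/2 * A * A ≤ (R'+δ)/2 * ((1+δ/2)^2*A^4) := by
    have h1 : A*A ≤ (1+δ/2)^2*A^4 := by
      nlinarith only [mul_nonneg (sub_nonneg.mpr hd1) (by positivity : (0:ℝ) ≤ A^4), hA42]
    nlinarith only [mul_le_mul_of_nonneg_left h1 hBpos.le]
  have hkey2 : ((R'+δ)/2 + δ/2*((R'+δ)/2)) * A^2 * A^2 + δ/2 * ((R'+δ)/2 * A * A)
      ≤ (R'+δ)/2 * ((1+δ/2)^2*A^4) := by
    have h1 : A^2 ≤ (1+δ/2)*A^4 := by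
      nlinarith only [hA42, mul_nonneg (le_of_lt (half_pos hδ)) (by positivity : (0:ℝ) ≤ A^4)]
    have h2 := mul_le_mul_of_nonneg_left h1 (by positivity : (0:ℝ) ≤ δ/2*((R'+δ)/2))
    nlinarith only [h2]
  have hRbig : R' + 2*δ ≤ (1+δ/2)^2*A^4*R' + δ*(1+δ/2)^2*A^4 + δ := by
    have h1 : 0 ≤ ((1+δ/2)^2*A^4 - 1)*R' :=
      mul_nonneg (sub_nonneg.mpr hC1) (by linarith : (0:ℝ) ≤ R')
    have h2 : 0 ≤ ((1+δ/2)^2*A^4 - 1)*δ := mul_nonneg (sub_nonneg.mpr hC1) hδ.le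
    nlinarith only [h1, h2]
  obtain ⟨hssv_l, hssv_u⟩ := abs_lt.mp hssv
  obtain ⟨hsvt2_l, hsvt2_u⟩ := abs_lt.mp hsvt2
  obtain ⟨hv1t1_l, hv1t1_u⟩ := abs_lt.mp hv1t1
  obtain ⟨hv2svt2_l, hv2svt2_u⟩ := abs_le.mp hv2svt2
  refine ⟨⟨?_, ?_⟩, ⟨?_, ?_⟩, ⟨?_, ?_⟩, ?_, ?_⟩
  · -- lower bound first component
    have hlo1 : Real.exp (-R'/2) < A^2*a := by
      nlinarith only [hx1l, mul_pos (sub_pos.mpr hu1r) hp]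
    have hlo2 : En^2*Real.exp (-R'/2) < En^2*(A^2*a) :=
      mul_lt_mul_of_pos_left hlo1 (pow_pos hEnpos 2)
    have hlo3 : En^2*(A^2*a) = En*a := by
      rw [show En^2*(A^2*a) = (En*A^2)*(En*a) from by ring, hEA, one_mul]
    have hlo4 : En*a ≤ v1*a := mul_le_mul_of_nonneg_right hv1l hp.le
    have hlo5 : En^2*Real.exp (-R'/2) = Real.exp (-R'/2 - δ) := by
      rw [hEn2, ← Real.exp_add]; congr 1; ring
    have hlo6 : Real.exp (-((1+δ/2)^2*A^4*R' + δ*(1+δ/2)^2*A^4 + δ)/2)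
        ≤ Real.exp (-R'/2 - δ) :=
      Real.exp_le_exp.mpr (by linarith only [hRbig])
    linarith only [hlo2, hlo3, hlo4, hlo5, hlo6]
  · -- upper bound first component
    have hup1 : v1*a < A^2*a := by
      nlinarith only [mul_pos (sub_pos.mpr hv1r) hp]
    have hup2 : A^2*a ≤ A^4*(u1*a) := by
      nlinarith only [mul_nonneg (mul_nonneg (sq_nonneg A) hp.le) (sub_nonneg.mpr hu1A2)]
    have hup3 : A^4*(u1*a) < A^4*Real.exp (R'/2) :=
      mul_lt_mul_of_pos_left hx1r (pow_pos hApos 4)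
    have hup4 : A^4*Real.exp (R'/2) = Real.exp (R'/2 + δ) := by
      rw [Real.exp_add, hA4']; ring
    have hup5 : Real.exp (R'/2 + δ)
        ≤ Real.exp (((1+δ/2)^2*A^4*R' + δ*(1+δ/2)^2*A^4 + δ)/2) :=
      Real.exp_le_exp.mpr (by linarith only [hRbig])
    linarith only [hup1, hup2, hup3, hup4, hup5]
  · linarith only [hssv_l, hv2l, hkey1]
  · linarith only [hssv_u, hv2r, hkey1]
  · linarith only [hv1t1_l, hv2svt2_l, hv3l, hkey2]
  · linarith only [hv1t1_u, hv2svt2_u, hv3r, hkey2]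
  · linarith only [hsvt2_l, hv4l, hkey1]
  · linarith only [hsvt2_u, hv4r, hkey1]

/-- For `δ > 0`, `R' > 1` and `R = (1+δ/2)² e^δ R' + δ(1+δ/2)² e^δ + δ`: if
`Q_δ(p,q,r) \ Q_R ≠ ∅`, then `Q_δ(p,q,r) ∩ Q_{R'} = ∅`. -/
theorem box_separation (δ R' : ℝ) (hδ : 0 < δ) (hR' : 1 < R') (p : SG) (hp : 0 < p.1)
    (hne : (boxAt δ p \ Qbox ((1 + δ/2) ^ 2 * Real.exp δ * R'
        + δ * (1 + δ/2) ^ 2 * Real.exp δ + δ)).Nonempty) :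
    boxAt δ p ∩ Qbox R' = ∅ := by
  obtain ⟨y, hy, hyR⟩ := hne
  rw [Set.eq_empty_iff_forall_notMem]
  rintro x ⟨hx, hxR'⟩
  obtain ⟨u, hu, rfl⟩ := hx
  obtain ⟨w, hw, rfl⟩ := hy
  exact hyR (box_sep_key δ R' hδ hR' p u w hp hu hw hxR')

end
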